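/- Let C ⊆ ℝⁿ be a nonempty closed convex set, M > 0, and f : ℝⁿ → ℝ be continuously differentiable and M-strongly convex on C, with ∇f L-Lipschitz on C (L > 0). Let (x^k), (p^k), (v_k) be Frank–Wolfe sequences for f on C with v_k < 0 for all k, and suppose (x^k) converges to a point x* ∈ C with f(x*) ≤ f(z) for all z ∈ C. Suppose σ > 0 satisfies ‖p^k − x^k‖ ≤ σ for all k, γ > 0 satisfies ‖∇f(x^k)‖ ≤ γ for all k, and set Γ := min{1/(2γσ), 1/(2Lσ²)}. Then ‖x^k − x*‖ ≤ √(2/(Γ·M))/√k for all k = 1, 2, …. -/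

import Mathlib

open scoped RealInnerProductSpace

section FWAux

variable {E : Type*} [NormedAddCommGroup E] [InnerProductSpace ℝ E] [CompleteSpace E]

lemma fw_chord_deriv {f : E → ℝ} (hf : ContDiff ℝ 1 f) (x d : E) (t₀ : ℝ) :
    HasDerivAt (fun t : ℝ => f (x + t • d)) ⟪gradient f (x + t₀ • d), d⟫ t₀ := by
  have hline : HasDerivAt (fun t : ℝ => x + t • d) d t₀ := by
    simpa using ((hasDerivAt_id t₀).smul_const d).const_add x
  have hg := ((hf.differentiable one_ne_zero) (x + t₀ • d)).hasGradientAt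
  rw [hasGradientAt_iff_hasFDerivAt] at hg
  have := hg.comp_hasDerivAt t₀ hline
  exact this

/-- Descent lemma on a convex set with Lipschitz gradient. -/
lemma fw_descent {C : Set E} (hCconv : Convex ℝ C) {f : E → ℝ} (hf : ContDiff ℝ 1 f) {L : ℝ}
    (hLip : ∀ a ∈ C, ∀ b ∈ C, ‖gradient f a - gradient f b‖ ≤ L * ‖a - b‖)
    {x y : E} (hx : x ∈ C) (hy : y ∈ C) :
    f y ≤ f x + ⟪gradient f x, y - x⟫ + L / 2 * ‖y - x‖ ^ 2 := by
  set d := y - x with hd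
  set φ : ℝ → ℝ := fun t => f (x + t • d) - t * ⟪gradient f x, d⟫ - L / 2 * t ^ 2 * ‖d‖ ^ 2
    with hφ
  have hmem : ∀ t : ℝ, t ∈ Set.Icc (0:ℝ) 1 → x + t • d ∈ C := by
    intro t ht
    have := hCconv hy hx ht.1 (by linarith [ht.2] : (0:ℝ) ≤ 1 - t) (by ring)
    convert this using 1
    simp only [hd]; module
  have hder : ∀ t : ℝ, HasDerivAt φ
      (⟪gradient f (x + t • d), d⟫ - ⟪gradient f x, d⟫ - L * t * ‖d‖ ^ 2) t := by
    intro t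
    have h1 := fw_chord_deriv hf x d t
    have h2 : HasDerivAt (fun t : ℝ => t * ⟪gradient f x, d⟫) ⟪gradient f x, d⟫ t := by
      simpa using (hasDerivAt_id t).mul_const ⟪gradient f x, d⟫
    have h3 : HasDerivAt (fun t : ℝ => L / 2 * t ^ 2 * ‖d‖ ^ 2) (L * t * ‖d‖ ^ 2) t := by
      have h2' : HasDerivAt (fun t : ℝ => t ^ 2) (2 * t) t := by
        simpa using hasDerivAt_pow 2 t
      have h := (h2'.const_mul (L / 2)).mul_const (‖d‖ ^ 2)
      have he : L / 2 * (2 * t) * ‖d‖ ^ 2 = L * t * ‖d‖ ^ 2 := by ring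
      rwa [he] at h
    exact (h1.sub h2).sub h3
  have hanti : φ 1 ≤ φ 0 := by
    have hcont : ContinuousOn φ (Set.Icc 0 1) := fun t _ =>
      (hder t).continuousAt.continuousWithinAt
    have hd0 : ∀ t ∈ interior (Set.Icc (0:ℝ) 1), deriv φ t ≤ 0 := by
      intro t ht
      rw [interior_Icc] at ht
      rw [(hder t).deriv]
      have hmemt : x + t • d ∈ C := hmem t ⟨le_of_lt ht.1, le_of_lt ht.2⟩
      have hCS : ⟪gradient f (x + t • d) - gradient f x, d⟫ ≤
          ‖gradient f (x + t • d) - gradient f x‖ * ‖d‖ := real_inner_le_norm _ _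
      have hlip := hLip _ hmemt _ hx
      have hnn : ‖(x + t • d) - x‖ = t * ‖d‖ := by
        rw [show (x + t • d) - x = t • d by abel, norm_smul, Real.norm_eq_abs,
          abs_of_pos ht.1]
      rw [hnn] at hlip
      have : ⟪gradient f (x + t • d) - gradient f x, d⟫ ≤ L * t * ‖d‖ ^ 2 := by
        calc ⟪gradient f (x + t • d) - gradient f x, d⟫
            ≤ ‖gradient f (x + t • d) - gradient f x‖ * ‖d‖ := hCS
          _ ≤ (L * (t * ‖d‖)) * ‖d‖ := by
              apply mul_le_mul_of_nonneg_right hlip (norm_nonneg _)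
          _ = L * t * ‖d‖ ^ 2 := by ring
      rw [inner_sub_left] at this
      linarith
    have hA : AntitoneOn φ (Set.Icc 0 1) :=
      antitoneOn_of_deriv_nonpos (convex_Icc 0 1) hcont
        (fun t _ => ((hder t).differentiableAt).differentiableWithinAt) hd0
    exact hA (Set.left_mem_Icc.mpr zero_le_one) (Set.right_mem_Icc.mpr zero_le_one) zero_le_one
  have h0 : φ 0 = f x := by simp [hφ]
  have h1 : φ 1 = f y - ⟪gradient f x, d⟫ - L / 2 * ‖d‖ ^ 2 := by
    have he : x + d = y := by rw [hd]; abel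
    simp only [hφ, one_smul, one_pow, one_mul, he]
    ring
  rw [h0, h1] at hanti
  linarith

lemma fw_grad_lower {f : E → ℝ} (hf : ContDiff ℝ 1 f) (x y : E) (K : ℝ)
    (h : ∀ t : ℝ, 0 < t → t ≤ 1 →
      f (x + t • (y - x)) ≤ f x + t * (f y - f x) - K * t * (1 - t)) :
    ⟪gradient f x, y - x⟫ ≤ f y - f x - K := by
  have hD := fw_chord_deriv hf x (y - x) 0
  simp only [zero_smul, add_zero] at hD
  rw [hasDerivAt_iff_tendsto_slope] at hD
  have h1 : Filter.Tendsto (slope (fun t : ℝ => f (x + t • (y - x))) 0)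
      (nhdsWithin 0 (Set.Ioi 0)) (nhds ⟪gradient f x, y - x⟫) :=
    hD.mono_left (nhdsWithin_mono 0 fun t ht => Set.mem_compl_singleton_iff.mpr (ne_of_gt ht))
  have h2 : Filter.Tendsto (fun t : ℝ => (f y - f x) - K * (1 - t)) (nhdsWithin 0 (Set.Ioi 0))
      (nhds (f y - f x - K)) := by
    have hc : Filter.Tendsto (fun t : ℝ => (f y - f x) - K * (1 - t)) (nhds 0)
        (nhds ((f y - f x) - K * (1 - 0))) := by
      exact (Filter.tendsto_id.const_sub 1 |>.const_mul K).const_sub (f y - f x)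
    simpa using hc.mono_left nhdsWithin_le_nhds
  refine le_of_tendsto_of_tendsto h1 h2 ?_
  filter_upwards [Ioc_mem_nhdsGT_of_mem (Set.mem_Ico.mpr ⟨le_refl 0, zero_lt_one⟩)] with t ht
  have ht0 := ht.1
  have hb := h t ht0 ht.2
  simp only [slope_def_field, sub_zero]
  rw [div_le_iff₀ ht0]
  have h0 : f (x + (0:ℝ) • (y - x)) = f x := by simp
  calc f (x + t • (y - x)) - f (x + (0:ℝ) • (y - x))
      = f (x + t • (y - x)) - f x := by rw [h0]
    _ ≤ (f x + t * (f y - f x) - K * t * (1 - t)) - f x := by linarith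
    _ = (f y - f x - K * (1 - t)) * t := by ring

end FWAux

set_option maxHeartbeats 1000000 in
/-- Iteration-complexity bound for the Frank–Wolfe sequence under `M`-strong convexity:
`‖x k - x*‖ ≤ √(2/(Γ M))/√k` for all `k ≥ 1`, where `Γ = min (1/(2γσ)) (1/(2Lσ²))`. -/
theorem frank_wolfe_complexity_strongly_convex (n : ℕ) (C : Set (EuclideanSpace ℝ (Fin n)))
    (hCne : C.Nonempty) (hCcl : IsClosed C) (hCconv : Convex ℝ C)
    (M : ℝ) (hM : 0 < M)
    (f : EuclideanSpace ℝ (Fin n) → ℝ) (hf : ContDiff ℝ 1 f)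
    (hsc : ∀ a ∈ C, ∀ b ∈ C, ∀ t : ℝ, 0 ≤ t → t ≤ 1 →
      f (t • a + (1 - t) • b) ≤ t * f a + (1 - t) * f b - M / 2 * t * (1 - t) * ‖a - b‖ ^ 2)
    (L : ℝ) (hL : 0 < L)
    (hLip : ∀ a ∈ C, ∀ b ∈ C, ‖gradient f a - gradient f b‖ ≤ L * ‖a - b‖)
    (x p : ℕ → EuclideanSpace ℝ (Fin n)) (v : ℕ → ℝ)
    (hx0 : x 0 ∈ C) (hpC : ∀ k, p k ∈ C)
    (hpmin : ∀ k, ∀ q ∈ C, ⟪gradient f (x k), p k - x k⟫ ≤ ⟪gradient f (x k), q - x k⟫)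
    (hv : ∀ k, v k = ⟪gradient f (x k), p k - x k⟫)
    (hiter : ∀ k, x (k + 1) =
      x k + (min 1 (|v k| / (L * ‖p k - x k‖ ^ 2))) • (p k - x k))
    (hvneg : ∀ k, v k < 0)
    (xstar : EuclideanSpace ℝ (Fin n)) (hxstar : xstar ∈ C)
    (hlim : Filter.Tendsto x Filter.atTop (nhds xstar))
    (hopt : ∀ z ∈ C, f xstar ≤ f z)
    (σ : ℝ) (hσ : 0 < σ) (hσb : ∀ k, ‖p k - x k‖ ≤ σ)
    (γ : ℝ) (hγ : 0 < γ) (hγb : ∀ k, ‖gradient f (x k)‖ ≤ γ)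
    (Γ : ℝ) (hΓ : Γ = min (1 / (2 * γ * σ)) (1 / (2 * L * σ ^ 2))) :
    ∀ k : ℕ, 1 ≤ k → ‖x k - xstar‖ ≤ Real.sqrt (2 / (Γ * M)) / Real.sqrt k := by
  have hΓpos : 0 < Γ := by
    rw [hΓ]; exact lt_min (by positivity) (by positivity)
  have hxC : ∀ j, x j ∈ C := by
    intro j
    induction j with
    | zero => exact hx0
    | succ j ih =>
      rw [hiter j]
      set lam := min 1 (|v j| / (L * ‖p j - x j‖ ^ 2)) with hlam
      have h0 : 0 ≤ lam := le_min zero_le_one (div_nonneg (abs_nonneg _) (by positivity))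
      have h1 : lam ≤ 1 := min_le_left _ _
      have := hCconv (hpC j) ih h0 (by linarith : (0:ℝ) ≤ 1 - lam) (by ring)
      convert this using 1
      module
  have hs : ∀ j, 0 < ‖p j - x j‖ := by
    intro j
    rcases eq_or_lt_of_le (norm_nonneg (p j - x j)) with h | h
    · exfalso
      have hpe : p j - x j = 0 := by rw [← norm_eq_zero]; exact h.symm
      have hv0 := hv j
      rw [hpe, inner_zero_right] at hv0
      exact absurd (hvneg j) (by rw [hv0]; exact lt_irrefl 0)
    · exact h
  set e : ℕ → ℝ := fun j => f (x j) - f xstar with he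
  have he0 : ∀ j, 0 ≤ e j := fun j => sub_nonneg.mpr (hopt _ (hxC j))
  have hstrong : ∀ z ∈ C, M / 2 * ‖z - xstar‖ ^ 2 ≤ f z - f xstar := by
    intro z hz
    have hineq : ∀ t : ℝ, 0 < t → t ≤ 1 →
        M / 2 * (1 - t) * ‖z - xstar‖ ^ 2 ≤ f z - f xstar := by
      intro t ht0 ht1
      have hm := hsc z hz xstar hxstar t (le_of_lt ht0) ht1
      have hin : t • z + (1 - t) • xstar ∈ C :=
        hCconv hz hxstar (le_of_lt ht0) (by linarith) (by ring)
      have hop := hopt _ hin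
      have hmul : t * (M / 2 * (1 - t) * ‖z - xstar‖ ^ 2) ≤ t * (f z - f xstar) := by
        nlinarith
      exact le_of_mul_le_mul_left hmul ht0
    have hT1 : Filter.Tendsto (fun t : ℝ => M / 2 * (1 - t) * ‖z - xstar‖ ^ 2)
        (nhdsWithin 0 (Set.Ioi 0)) (nhds (M / 2 * ‖z - xstar‖ ^ 2)) := by
      have hc : Filter.Tendsto (fun t : ℝ => M / 2 * (1 - t) * ‖z - xstar‖ ^ 2) (nhds 0)
          (nhds (M / 2 * (1 - 0) * ‖z - xstar‖ ^ 2)) :=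
        ((Filter.tendsto_id.const_sub 1).const_mul (M / 2)).mul_const _
      simpa using hc.mono_left nhdsWithin_le_nhds
    refine le_of_tendsto_of_tendsto hT1 tendsto_const_nhds ?_
    filter_upwards [Ioc_mem_nhdsGT_of_mem (Set.mem_Ico.mpr ⟨le_refl 0, zero_lt_one⟩)] with t ht
    exact hineq t ht.1 ht.2
  have hgap : ∀ j, e j ≤ |v j| := by
    intro j
    have hK : 0 ≤ M / 2 * ‖xstar - x j‖ ^ 2 := by positivity
    have harg : ∀ t : ℝ, 0 < t → t ≤ 1 → f (x j + t • (xstar - x j)) ≤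
        f (x j) + t * (f xstar - f (x j)) - (M / 2 * ‖xstar - x j‖ ^ 2) * t * (1 - t) := by
      intro t ht0 ht1
      have hm := hsc xstar hxstar (x j) (hxC j) t (le_of_lt ht0) ht1
      have harg2 : t • xstar + (1 - t) • x j = x j + t • (xstar - x j) := by module
      rw [harg2] at hm
      have hre : t * f xstar + (1 - t) * f (x j) - M / 2 * t * (1 - t) * ‖xstar - x j‖ ^ 2
          = f (x j) + t * (f xstar - f (x j)) - (M / 2 * ‖xstar - x j‖ ^ 2) * t * (1 - t) := by
        ring
      linarith
    have h := fw_grad_lower hf (x j) xstar _ harg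
    have hp' := hpmin j xstar hxstar
    have hvj := hv j
    have habs : |v j| = -(v j) := abs_of_neg (hvneg j)
    have hvle : v j ≤ ⟪gradient f (x j), xstar - x j⟫ := by rw [hvj]; exact hp'
    simp only [he]
    linarith
  have hvb : ∀ j, |v j| ≤ γ * σ := by
    intro j
    rw [hv j]
    calc |⟪gradient f (x j), p j - x j⟫| ≤ ‖gradient f (x j)‖ * ‖p j - x j‖ :=
          abs_real_inner_le_norm _ _
      _ ≤ γ * σ := mul_le_mul (hγb j) (hσb j) (norm_nonneg _) (le_of_lt hγ)
  have hdec : ∀ j, e (j + 1) ≤ e j - Γ * e j ^ 2 := by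
    intro j
    set a := |v j| with ha
    set s := ‖p j - x j‖ with hs'
    have hsp : 0 < s := hs j
    have hap : 0 < a := abs_pos.mpr (ne_of_lt (hvneg j))
    set lam := min 1 (a / (L * s ^ 2)) with hlam
    have hlam0 : 0 ≤ lam := le_min zero_le_one (by positivity)
    have hdesc := fw_descent hCconv hf hLip (hxC j) (hxC (j + 1))
    have hdd : x (j + 1) - x j = lam • (p j - x j) := by rw [hiter j]; abel
    rw [hdd] at hdesc
    have hinner : ⟪gradient f (x j), lam • (p j - x j)⟫ = lam * v j := by
      rw [real_inner_smul_right, ← hv j]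
    have hnorm2 : ‖lam • (p j - x j)‖ ^ 2 = lam ^ 2 * s ^ 2 := by
      rw [norm_smul, Real.norm_eq_abs, abs_of_nonneg hlam0, mul_pow]
    rw [hinner, hnorm2] at hdesc
    have hva : v j = -a := by rw [ha, abs_of_neg (hvneg j)]; ring
    have hkey : lam * v j + L / 2 * (lam ^ 2 * s ^ 2) ≤ -(Γ * a ^ 2) := by
      rcases le_or_gt (L * s ^ 2) a with hc | hc
      · have h1 : (1:ℝ) ≤ a / (L * s ^ 2) := (le_div_iff₀ (by positivity)).mpr (by linarith)
        have hlam' : lam = 1 := min_eq_left h1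
        rw [hlam', hva]
        have hΓa : Γ * a ≤ 1 / 2 := by
          have h2 : Γ ≤ 1 / (2 * γ * σ) := hΓ ▸ min_le_left _ _
          have h3 : a ≤ γ * σ := hvb j
          calc Γ * a ≤ (1 / (2 * γ * σ)) * (γ * σ) :=
                mul_le_mul h2 h3 (le_of_lt hap) (by positivity)
            _ = 1 / 2 := by field_simp
        nlinarith
      · have h1 : a / (L * s ^ 2) ≤ 1 := (div_le_one (by positivity)).mpr (le_of_lt hc)
        have hlam' : lam = a / (L * s ^ 2) := min_eq_right h1
        rw [hlam', hva]
        have hexp : a / (L * s ^ 2) * -a + L / 2 * ((a / (L * s ^ 2)) ^ 2 * s ^ 2)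
            = -(a ^ 2 / (2 * L * s ^ 2)) := by
          field_simp
          ring
        rw [hexp]
        have h2 : Γ ≤ 1 / (2 * L * σ ^ 2) := hΓ ▸ min_le_right _ _
        have h3 : s ≤ σ := hσb j
        have h4 : 1 / (2 * L * σ ^ 2) ≤ 1 / (2 * L * s ^ 2) := by
          have hss : s ^ 2 ≤ σ ^ 2 := pow_le_pow_left₀ (le_of_lt hsp) h3 2
          apply one_div_le_one_div_of_le (by positivity)
          exact mul_le_mul_of_nonneg_left hss (by positivity : (0:ℝ) ≤ 2 * L)
        have h5 : Γ * a ^ 2 ≤ a ^ 2 / (2 * L * s ^ 2) := by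
          calc Γ * a ^ 2 ≤ (1 / (2 * L * s ^ 2)) * a ^ 2 :=
                mul_le_mul_of_nonneg_right (le_trans h2 h4) (by positivity)
            _ = a ^ 2 / (2 * L * s ^ 2) := by ring
        linarith
    have hea : e j ≤ a := hgap j
    have hsq : Γ * e j ^ 2 ≤ Γ * a ^ 2 := by
      apply mul_le_mul_of_nonneg_left _ (le_of_lt hΓpos)
      exact pow_le_pow_left₀ (he0 j) hea 2
    have heq1 : e (j + 1) = f (x (j + 1)) - f xstar := rfl
    have heq2 : e j = f (x j) - f xstar := rfl
    rw [heq1, heq2]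
    rw [heq2] at hsq
    linarith
  have hbound : ∀ j : ℕ, 1 ≤ j → e j ≤ 1 / (Γ * (j + 3)) := by
    intro j hj
    induction j with
    | zero => exact absurd hj (by norm_num)
    | succ j ih =>
      rcases Nat.lt_or_ge j 1 with h1 | h1
      · have hj0 : j = 0 := by omega
        subst hj0
        have hd := hdec 0
        rw [le_div_iff₀ (by positivity)]
        push_cast
        nlinarith [sq_nonneg (2 * Γ * e 0 - 1), he0 0, hΓpos,
          mul_le_mul_of_nonneg_left hd (by positivity : (0:ℝ) ≤ 4 * Γ)]
      · have ihh := ih h1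
        have hd := hdec j
        set c := Γ * e j with hc
        have hc0 : 0 ≤ c := mul_nonneg (le_of_lt hΓpos) (he0 j)
        have hcK : c * ((j:ℝ) + 3) ≤ 1 := by
          rw [le_div_iff₀ (by positivity)] at ihh
          calc c * ((j:ℝ) + 3) = e j * (Γ * ((j:ℝ) + 3)) := by rw [hc]; ring
            _ ≤ 1 := ihh
        rw [le_div_iff₀ (by positivity)]
        push_cast
        set u : ℝ := 1 - c * ((j:ℝ) + 3) with hu_def
        have hu : 0 ≤ u := by rw [hu_def]; linarith
        have hΓd : Γ * e (j + 1) ≤ c - c ^ 2 := by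
          have := mul_le_mul_of_nonneg_left hd (le_of_lt hΓpos)
          calc Γ * e (j + 1) ≤ Γ * (e j - Γ * e j ^ 2) := this
            _ = c - c ^ 2 := by rw [hc]; ring
        have hj1 : (1:ℝ) ≤ (j:ℝ) := by exact_mod_cast h1
        nlinarith [mul_nonneg (mul_nonneg hu hu) (by linarith : (0:ℝ) ≤ (j:ℝ) + 4),
          mul_nonneg (mul_nonneg hu (by linarith : (0:ℝ) ≤ (j:ℝ) + 1))
            (by linarith : (0:ℝ) ≤ (j:ℝ) + 4),
          mul_le_mul_of_nonneg_right hΓd (by linarith : (0:ℝ) ≤ (j:ℝ) + 4),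
          mul_nonneg hu hu, hu, hc0, sq_nonneg c]
  intro k hk
  have hb := hbound k hk
  have hk1 : (1:ℝ) ≤ (k:ℝ) := by exact_mod_cast hk
  have hkpos : (0:ℝ) < (k:ℝ) := by linarith
  have h1 := hstrong (x k) (hxC k)
  have h3 : 1 / (Γ * ((k:ℝ) + 3)) ≤ 1 / (Γ * k) := by
    apply one_div_le_one_div_of_le (by positivity)
    nlinarith
  have hSS : M / 2 * ‖x k - xstar‖ ^ 2 ≤ 1 / (Γ * k) := by
    have : e k = f (x k) - f xstar := rfl
    linarith [hb, h1, h3]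
  have hS2 : ‖x k - xstar‖ ^ 2 ≤ 2 / (Γ * M) / k := by
    rw [div_div, le_div_iff₀ (by positivity)]
    have h4 : (M / 2 * ‖x k - xstar‖ ^ 2) * (Γ * k) ≤ (1 / (Γ * k)) * (Γ * k) :=
      mul_le_mul_of_nonneg_right hSS (by positivity)
    rw [one_div_mul_cancel (by positivity)] at h4
    nlinarith
  have hfin : ‖x k - xstar‖ ≤ Real.sqrt (2 / (Γ * M) / k) :=
    (Real.le_sqrt (norm_nonneg _) (by positivity)).mpr hS2
  rw [Real.sqrt_div (by positivity : (0:ℝ) ≤ 2 / (Γ * M)) (k:ℝ)] at hfin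
  exact hfin
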